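/- Let n ≥ 1 be an integer and let x₁, …, x_n : ℝ → ℝ be differentiable functions; extend them by x_{−1} = x₀ = x_{n+1} = x_{n+2} := 0. Suppose that for every k with 1 ≤ k ≤ n and every t ∈ ℝ one has x_k′(t) = −d⁻_k·x_{k−2}(t) + (d⁻_k − d⁻_{k+2})·x_k(t) + d⁻_{k+2}·x_{k+2}(t), where d⁻_j := (j+2)²·(j−2)/(4j²). Then for every t ∈ ℝ, (d/dt)(∑_{k=1}^{n} x_k(t)²) ≤ −∑_{k=1}^{n} x_k(t)². -/

import Mathlib

/-- The tridiagonal coefficient `d⁻_j = (j+2)²·(j−2)/(4j²)` (integer index). -/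
noncomputable def dMinus (j : ℤ) : ℝ :=
  ((j : ℝ) + 2) ^ 2 * ((j : ℝ) - 2) / (4 * (j : ℝ) ^ 2)

lemma dMinus_gap (k : ℤ) (hk : 1 ≤ k) : dMinus k - dMinus (k + 2) ≤ -(1/2) := by
  unfold dMinus
  have ha : (1:ℝ) ≤ (k:ℝ) := by exact_mod_cast hk
  set a : ℝ := (k:ℝ) with hadef
  have h1 : a ≠ 0 := by linarith
  have h2 : a + 2 ≠ 0 := by linarith
  have key : (a + 2) ^ 2 * (a - 2) / (4 * a ^ 2) -
      ((a + 2) + 2) ^ 2 * ((a + 2) - 2) / (4 * (a + 2) ^ 2)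
      = -(1/2) - (2 * (a^2 + 6*a + 4)) / (a^2 * (a+2)^2) := by
    field_simp
    ring
  have hcast : ((k:ℝ) + 2) = (((k + 2 : ℤ)) : ℝ) := by push_cast; ring
  rw [← hcast, key]
  have hpos : 0 ≤ (2 * (a^2 + 6*a + 4)) / (a^2 * (a+2)^2) := by
    apply div_nonneg
    · nlinarith
    · positivity
  linarith

/-- Galerkin version of the exponential decay of the linearized `η⁻`-evolution: if
`x_k′ = −d⁻_k x_{k−2} + (d⁻_k − d⁻_{k+2}) x_k + d⁻_{k+2} x_{k+2}` for `1 ≤ k ≤ n`,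
with `x_{−1} = x₀ = x_{n+1} = x_{n+2} = 0`, then
`(d/dt) ∑_{k=1}^n x_k² ≤ −∑_{k=1}^n x_k²`. -/
theorem galerkin_decay_minus
    (n : ℕ) (hn : 1 ≤ n)
    (x : ℤ → ℝ → ℝ)
    (hxm1 : ∀ t, x (-1) t = 0)
    (hx0 : ∀ t, x 0 t = 0)
    (hxn1 : ∀ t, x ((n : ℤ) + 1) t = 0)
    (hxn2 : ∀ t, x ((n : ℤ) + 2) t = 0)
    (hODE : ∀ k : ℤ, 1 ≤ k → k ≤ (n : ℤ) → ∀ t : ℝ,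
      HasDerivAt (x k)
        (-(dMinus k) * x (k - 2) t + (dMinus k - dMinus (k + 2)) * x k t +
          dMinus (k + 2) * x (k + 2) t) t) :
    ∀ t : ℝ,
      deriv (fun s => ∑ k ∈ Finset.Icc (1 : ℤ) (n : ℤ), x k s ^ 2) t ≤
        -∑ k ∈ Finset.Icc (1 : ℤ) (n : ℤ), x k t ^ 2 := by
  intro t
  set D : ℤ → ℝ := fun k =>
    -(dMinus k) * x (k - 2) t + (dMinus k - dMinus (k + 2)) * x k t +
      dMinus (k + 2) * x (k + 2) t with hD
  have hderiv : HasDerivAt (fun s => ∑ k ∈ Finset.Icc (1 : ℤ) (n : ℤ), x k s ^ 2)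
      (∑ k ∈ Finset.Icc (1 : ℤ) (n : ℤ), (2 : ℝ) * x k t ^ 1 * D k) t := by
    apply HasDerivAt.fun_sum
    intro k hk
    rw [Finset.mem_Icc] at hk
    have h := (hODE k hk.1 hk.2 t).fun_pow 2
    exact h.congr_deriv (by norm_num [hD])
  rw [hderiv.deriv]
  -- the telescoping cross terms
  set g : ℤ → ℝ := fun k => 2 * dMinus k * x (k - 2) t * x k t with hg
  have hsplit : ∀ k ∈ Finset.Icc (1 : ℤ) (n : ℤ),
      (2 : ℝ) * x k t ^ 1 * D k
        = (-(g k) + g (k + 2)) + 2 * (dMinus k - dMinus (k + 2)) * x k t ^ 2 := by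
    intro k _
    simp only [hD, hg]
    have : (k : ℤ) + 2 - 2 = k := by ring
    rw [this]
    ring
  rw [Finset.sum_congr rfl hsplit, Finset.sum_add_distrib]
  -- cross terms cancel
  have hcross : ∑ k ∈ Finset.Icc (1 : ℤ) (n : ℤ), (-(g k) + g (k + 2)) = 0 := by
    rw [Finset.sum_add_distrib, Finset.sum_neg_distrib]
    have hshift : ∑ k ∈ Finset.Icc (1 : ℤ) (n : ℤ), g (k + 2)
        = ∑ k ∈ Finset.Icc (3 : ℤ) ((n : ℤ) + 2), g k := by
      have he : Finset.Icc (3 : ℤ) ((n : ℤ) + 2)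
          = Finset.map (addRightEmbedding 2) (Finset.Icc (1 : ℤ) (n : ℤ)) := by
        rw [Finset.map_add_right_Icc]; norm_num
      rw [he, Finset.sum_map]
      rfl
    have hfull1 : ∑ k ∈ Finset.Icc (1 : ℤ) ((n : ℤ) + 2), g k
        = ∑ k ∈ Finset.Icc (1 : ℤ) (n : ℤ), g k := by
      symm
      apply Finset.sum_subset
      · apply Finset.Icc_subset_Icc_right; linarith
      · intro k hk hk'
        rw [Finset.mem_Icc] at hk
        rw [Finset.mem_Icc] at hk'
        have h1 : k = (n : ℤ) + 1 ∨ k = (n : ℤ) + 2 := by omega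
        rcases h1 with h1 | h1 <;> subst h1
        · simp [hg, hxn1]
        · simp [hg, hxn2]
    have hfull2 : ∑ k ∈ Finset.Icc (1 : ℤ) ((n : ℤ) + 2), g k
        = ∑ k ∈ Finset.Icc (3 : ℤ) ((n : ℤ) + 2), g k := by
      symm
      apply Finset.sum_subset
      · apply Finset.Icc_subset_Icc_left; norm_num
      · intro k hk hk'
        rw [Finset.mem_Icc] at hk
        rw [Finset.mem_Icc] at hk'
        have h1 : k = 1 ∨ k = 2 := by omega
        rcases h1 with h1 | h1 <;> subst h1
        · norm_num [hg, hxm1]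
        · norm_num [hg, hx0]
    rw [hshift, ← hfull2, hfull1]
    ring
  rw [hcross, zero_add]
  -- diagonal bound
  rw [← Finset.sum_neg_distrib]
  apply Finset.sum_le_sum
  intro k hk
  rw [Finset.mem_Icc] at hk
  have hgap := dMinus_gap k hk.1
  have hsq : 0 ≤ x k t ^ 2 := sq_nonneg _
  nlinarith
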